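/- Let 0 < x_0 < x_1 < ⋯ < x_n be real numbers and let k_0 < k_1 < ⋯ < k_n be real numbers. Then the (n+1)×(n+1) matrix whose (i,j) entry is x_i^{k_j} is strictly totally positive; that is, every minor of this matrix (the determinant of any square submatrix obtained by selecting rows i_1 < ⋯ < i_m and columns j_1 < ⋯ < j_m) is strictly positive. -/

import Mathlib

open Real Finset

lemma rpow_indep : ∀ (m : ℕ) (k c x : Fin m → ℝ), StrictMono k → StrictMono x →
    (∀ i, 0 < x i) → (∀ i, ∑ j, c j * x i ^ k j = 0) → ∀ j, c j = 0 := by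
  intro m
  induction m with
  | zero => intro _ _ _ _ _ _ _ j; exact j.elim0
  | succ m ih =>
    intro k c x hk hx hxp hz
    -- g t = ∑ j, c j * t ^ (k j - k 0)
    set g : ℝ → ℝ := fun t => ∑ j, c j * t ^ (k j - k 0) with hg
    set g' : ℝ → ℝ := fun t => ∑ j, c j * ((k j - k 0) * t ^ (k j - k 0 - 1)) with hg'
    have hgz : ∀ i, g (x i) = 0 := by
      intro i
      have : g (x i) = (∑ j, c j * x i ^ k j) * (x i ^ k 0)⁻¹ := by
        rw [Finset.sum_mul]
        refine Finset.sum_congr rfl fun j _ => ?_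
        rw [Real.rpow_sub (hxp i), div_eq_mul_inv, mul_assoc]
      rw [this, hz i, zero_mul]
    have hderiv : ∀ t : ℝ, 0 < t → HasDerivAt g (g' t) t := by
      intro t ht
      exact HasDerivAt.fun_sum fun j _ =>
        (Real.hasDerivAt_rpow_const (Or.inl ht.ne')).const_mul (c j)
    have hcont : ContinuousOn g (Set.Ici (0:ℝ) \ {0}) := by
      refine continuousOn_finset_sum _ fun j _ => fun t ht =>
        ((continuousAt_const.mul (Real.continuousAt_rpow_const t _ (Or.inl ht.2))).continuousWithinAt)
    -- Rolle points
    have rolle : ∀ i : Fin m, ∃ ξ ∈ Set.Ioo (x i.castSucc) (x i.succ), g' ξ = 0 := by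
      intro i
      refine exists_hasDerivAt_eq_zero (hx (Fin.castSucc_lt_succ (i := i))) ?_
        (by rw [hgz, hgz]) (fun t ht => hderiv t ((hxp _).trans ht.1))
      exact hcont.mono (fun t ht => ⟨le_trans (hxp _).le ht.1, ((hxp _).trans_le ht.1).ne'⟩)
    choose ξ hξ hξz using rolle
    have hξp : ∀ i, 0 < ξ i := fun i => (hxp _).trans (hξ i).1
    have hξmono : StrictMono ξ := by
      rcases m with _ | m
      · intro a b hab; exact a.elim0
      · rw [Fin.strictMono_iff_lt_succ]
        intro i
        calc ξ i.castSucc < x i.castSucc.succ := (hξ _).2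
          _ = x i.succ.castSucc := by rw [Fin.succ_castSucc]
          _ < ξ i.succ := (hξ _).1
    -- apply ih
    have key : ∀ j : Fin m, c j.succ * (k j.succ - k 0) = 0 := by
      refine ih (fun j => k j.succ - k 0 - 1) (fun j => c j.succ * (k j.succ - k 0)) ξ
        (fun a b hab => sub_lt_sub_right (sub_lt_sub_right (hk (Fin.succ_lt_succ_iff.2 hab)) _) _)
        hξmono hξp ?_
      intro i
      have := hξz i
      simp only [hg'] at this
      rw [Fin.sum_univ_succ] at this
      simp only [sub_self, zero_mul, mul_zero, zero_add] at this
      rw [← this]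
      refine Finset.sum_congr rfl fun j _ => by ring
    have hcs : ∀ j : Fin m, c j.succ = 0 := by
      intro j
      have hkpos : 0 < k j.succ - k 0 := sub_pos.2 (hk (Fin.succ_pos j))
      have := key j
      rcases mul_eq_zero.1 this with h | h
      · exact h
      · exact absurd h hkpos.ne'
    intro j
    rcases Fin.eq_zero_or_eq_succ j with rfl | ⟨j', rfl⟩
    · have := hz 0
      rw [Fin.sum_univ_succ] at this
      simp only [fun j => hcs j, zero_mul, Finset.sum_const_zero, add_zero] at this
      rcases mul_eq_zero.1 this with h | h
      · exact h
      · exact absurd h (Real.rpow_pos_of_pos (hxp 0) _).ne'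
    · exact hcs j'

lemma rpow_det_ne_zero (m : ℕ) (x k : Fin m → ℝ) (hx : StrictMono x)
    (hxp : ∀ i, 0 < x i) (hk : StrictMono k) :
    (Matrix.of fun i j => x i ^ k j).det ≠ 0 := by
  intro hdet
  obtain ⟨v, hv, hmv⟩ := Matrix.exists_mulVec_eq_zero_iff.2 hdet
  have hz : ∀ i, ∑ j, v j * x i ^ k j = 0 := by
    intro i
    have := congrFun hmv i
    simp only [Matrix.mulVec, dotProduct, Matrix.of_apply, Pi.zero_apply] at this
    rw [← this]
    exact Finset.sum_congr rfl fun j _ => mul_comm _ _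
  exact hv (funext (rpow_indep m k v x hk hx hxp hz))

lemma rpow_det_pos (m : ℕ) (x k : Fin m → ℝ) (hx : StrictMono x)
    (hxp : ∀ i, 0 < x i) (hk : StrictMono k) :
    0 < (Matrix.of fun i j => x i ^ k j).det := by
  have hF : ∀ t : ℝ, ∃ d : ℝ,
      d = (Matrix.of fun i j : Fin m => x i ^ ((1-t) * k j + t * (j:ℕ))).det := fun t => ⟨_, rfl⟩
  set F : ℝ → ℝ := fun t => (Matrix.of fun i j : Fin m => x i ^ ((1-t) * k j + t * (j:ℕ))).det
    with hFdef
  have hmono : ∀ t ∈ Set.Icc (0:ℝ) 1, StrictMono fun j : Fin m => (1-t) * k j + t * (j:ℕ) := by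
    intro t ht a b hab
    have h1 := hk hab
    have h2 : ((a:ℕ):ℝ) < ((b:ℕ):ℝ) := by exact_mod_cast hab
    rcases ht with ⟨ht0, ht1⟩
    show (1-t) * k a + t * (a:ℕ) < (1-t) * k b + t * (b:ℕ)
    rcases lt_or_eq_of_le ht1 with h | rfl
    · nlinarith
    · nlinarith
  have hne : ∀ t ∈ Set.Icc (0:ℝ) 1, F t ≠ 0 := fun t ht =>
    rpow_det_ne_zero m x _ hx hxp (hmono t ht)
  have hcont : Continuous F := by
    refine Continuous.matrix_det (continuous_matrix fun i j => ?_)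
    have : (fun t : ℝ => (Matrix.of fun i j : Fin m => x i ^ ((1-t) * k j + t * (j:ℕ))) i j)
        = fun t : ℝ => Real.exp (Real.log (x i) * ((1-t) * k j + t * (j:ℕ))) := by
      funext t
      simp only [Matrix.of_apply]
      rw [Real.rpow_def_of_pos (hxp i)]
    rw [this]
    exact Real.continuous_exp.comp (by continuity)
  have hF1 : 0 < F 1 := by
    have hm : (Matrix.of fun i j : Fin m => x i ^ ((1-(1:ℝ)) * k j + 1 * (j:ℕ)))
        = Matrix.vandermonde x := by
      ext i j
      simp only [Matrix.of_apply, Matrix.vandermonde_apply]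
      rw [show (1:ℝ) - 1 = 0 by ring, zero_mul, one_mul, zero_add, Real.rpow_natCast]
    have : F 1 = (Matrix.vandermonde x).det := by rw [hFdef]; exact congrArg Matrix.det hm
    rw [this, Matrix.det_vandermonde]
    refine Finset.prod_pos fun i _ => Finset.prod_pos fun j hj => ?_
    exact sub_pos.2 (hx (Finset.mem_Ioi.1 hj))
  have hF0 : F 0 = (Matrix.of fun i j => x i ^ k j).det := by
    rw [hFdef]
    refine congrArg Matrix.det ?_
    ext i j
    simp
  rw [← hF0]
  by_contra h
  push_neg at h
  have h0 : F 0 < 0 := lt_of_le_of_ne h (hne 0 (by norm_num))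
  have hmem : (0:ℝ) ∈ Set.Icc (F 0) (F 1) := ⟨h0.le, hF1.le⟩
  obtain ⟨t, ht, hFt⟩ := intermediate_value_Icc (by norm_num : (0:ℝ) ≤ 1)
    hcont.continuousOn hmem
  exact hne t ht hFt

/-- A real matrix is strictly totally positive if every minor (determinant of the
submatrix obtained by selecting rows `r 0 < r 1 < ⋯` and columns `c 0 < c 1 < ⋯`)
is strictly positive. -/
def IsStrictlyTotallyPositive {N M : ℕ} (A : Matrix (Fin N) (Fin M) ℝ) : Prop :=
  ∀ (k : ℕ) (r : Fin k → Fin N) (c : Fin k → Fin M),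
    StrictMono r → StrictMono c → 0 < (A.submatrix r c).det

/-- If `0 < x 0 < x 1 < ⋯ < x n` and `k 0 < k 1 < ⋯ < k n` are real
numbers, then the matrix with `(i,j)` entry `x i ^ k j` (real power) is strictly
totally positive. -/
theorem rpow_matrix_strictly_totally_positive
    (n : ℕ) (x k : Fin (n + 1) → ℝ)
    (hx0 : 0 < x 0) (hx : StrictMono x) (hk : StrictMono k) :
    IsStrictlyTotallyPositive (Matrix.of fun i j : Fin (n + 1) => x i ^ k j) := by
  intro m r c hr hc
  have hxp : ∀ i : Fin m, 0 < x (r i) :=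
    fun i => lt_of_lt_of_le hx0 (hx.monotone (Fin.zero_le _))
  have h := rpow_det_pos m (x ∘ r) (k ∘ c) (hx.comp hr) hxp (hk.comp hc)
  convert h using 2
  rfl
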